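/- Let x ∈ ℤ_p be a unit (|x|_p = 1). Then the sequence (x)_n = ∏_{i=1}^{n}(1 − x^i) converges to 0 in ℤ_p as n → ∞. -/

import Mathlib

open Filter

lemma key_norm (p : ℕ) [Fact p.Prime] (x : ℤ_[p]) (hx : ‖x‖ = 1) (k : ℕ)
    (hk : (p - 1) ∣ k) : ‖(1 - x ^ k : ℤ_[p])‖ ≤ (p : ℝ)⁻¹ := by
  have hzmod : PadicInt.toZMod (1 - x ^ k) = 0 := by
    obtain ⟨m, rfl⟩ := hk
    have hxu : IsUnit x := PadicInt.isUnit_iff.mpr hx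
    have hux : (PadicInt.toZMod x) ≠ 0 := (hxu.map (PadicInt.toZMod (p := p))).ne_zero
    have h1 : (PadicInt.toZMod x) ^ (p - 1) = 1 := ZMod.pow_card_sub_one_eq_one hux
    rw [map_sub, map_one, map_pow, pow_mul, h1, one_pow, sub_self]
  have hmem : (1 - x ^ k) ∈ Ideal.span {(p : ℤ_[p]) ^ 1} := by
    rw [pow_one, ← PadicInt.maximalIdeal_eq_span_p, ← PadicInt.ker_toZMod]
    exact hzmod
  have h := (PadicInt.norm_le_pow_iff_mem_span_pow (1 - x ^ k) 1).mpr hmem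
  simpa [zpow_neg, zpow_one] using h

theorem stmt13 (p : ℕ) [Fact p.Prime] (x : ℤ_[p]) (hx : ‖x‖ = 1) :
    Filter.Tendsto (fun n => ∏ i ∈ Finset.range n, (1 - x ^ (i + 1)))
      Filter.atTop (nhds 0) := by
  have hp : 1 < p := (‹Fact p.Prime›.out).one_lt
  have hq : 0 < p - 1 := by omega
  set a : ℕ → ℝ := fun n => ‖∏ i ∈ Finset.range n, (1 - x ^ (i + 1))‖ with ha
  have hanti : Antitone a := antitone_nat_of_succ_le (fun n => by
    simp only [ha, Finset.prod_range_succ, norm_mul]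
    exact mul_le_of_le_one_right (norm_nonneg _) (PadicInt.norm_le_one _))
  have hkey : ∀ m, a (m * (p - 1)) ≤ ((p : ℝ)⁻¹) ^ m := by
    intro m
    induction m with
    | zero => simp [ha]
    | succ m ih =>
      have hmul : (m + 1) * (p - 1) = m * (p - 1) + (p - 1) := by ring
      have hsplit : (∏ i ∈ Finset.range ((m + 1) * (p - 1)), (1 - x ^ (i + 1)))
          = (∏ i ∈ Finset.range (m * (p - 1)), (1 - x ^ (i + 1))) *
            ∏ i ∈ Finset.Ico (m * (p - 1)) ((m + 1) * (p - 1)), (1 - x ^ (i + 1)) := by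
        rw [Finset.range_eq_Ico, Finset.range_eq_Ico]
        exact (Finset.prod_Ico_consecutive (fun i => (1 - x ^ (i + 1) : ℤ_[p])) (Nat.zero_le _) (by omega : m * (p - 1) ≤ (m + 1) * (p - 1))).symm
      have hj : ((m + 1) * (p - 1) - 1) ∈
          Finset.Ico (m * (p - 1)) ((m + 1) * (p - 1)) := by
        simp only [Finset.mem_Ico]; omega
      have hchunk : ‖∏ i ∈ Finset.Ico (m * (p - 1)) ((m + 1) * (p - 1)),
          (1 - x ^ (i + 1))‖ ≤ (p : ℝ)⁻¹ := by
        rw [← Finset.mul_prod_erase _ _ hj, norm_mul]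
        have h1 : ‖(1 - x ^ ((m + 1) * (p - 1) - 1 + 1) : ℤ_[p])‖ ≤ (p : ℝ)⁻¹ := by
          have he : (m + 1) * (p - 1) - 1 + 1 = (m + 1) * (p - 1) := by omega
          rw [he]
          exact key_norm p x hx _ ⟨m + 1, Nat.mul_comm _ _⟩
        calc ‖(1 - x ^ ((m + 1) * (p - 1) - 1 + 1) : ℤ_[p])‖ * _
            ≤ (p : ℝ)⁻¹ * 1 :=
              mul_le_mul h1 (PadicInt.norm_le_one _) (norm_nonneg _) (by positivity)
          _ = (p : ℝ)⁻¹ := mul_one _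
      calc a ((m + 1) * (p - 1)) = a (m * (p - 1)) *
            ‖∏ i ∈ Finset.Ico (m * (p - 1)) ((m + 1) * (p - 1)), (1 - x ^ (i + 1))‖ := by
            simp only [ha, hsplit, norm_mul]
        _ ≤ ((p : ℝ)⁻¹) ^ m * (p : ℝ)⁻¹ :=
            mul_le_mul ih hchunk (norm_nonneg _) (by positivity)
        _ = ((p : ℝ)⁻¹) ^ (m + 1) := by ring
  have hbound : ∀ n, a n ≤ ((p : ℝ)⁻¹) ^ (n / (p - 1)) := fun n =>
    le_trans (hanti (Nat.div_mul_le_self n (p - 1))) (hkey _)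
  rw [tendsto_zero_iff_norm_tendsto_zero]
  apply squeeze_zero (fun n => norm_nonneg _) hbound
  have h1 : Tendsto (fun m : ℕ => ((p : ℝ)⁻¹) ^ m) atTop (nhds 0) :=
    tendsto_pow_atTop_nhds_zero_of_lt_one (by positivity)
      (by rw [inv_lt_one_iff₀]; right; exact_mod_cast hp)
  exact h1.comp (Filter.map_div_atTop_eq_nat (p - 1) hq).le
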